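/- Let Φ : M_m(ℂ) → M_k(ℂ) be a positive linear map and ρ a state on ℂ^n ⊗ ℂ^m. Then (Id ⊗ Φ)(ρ) fails to be positive semidefinite if and only if there exists a vector |η⟩ ∈ ℂ^n ⊗ ℂ^k of maximal Schmidt rank min(n,k) such that Tr[(Id ⊗ Φ†)(|η⟩⟨η|) ρ] < 0. -/

import Mathlib

open Matrix
open scoped ComplexOrder
lemma herm_add_smul_one_psd {m : ℕ} (H : Matrix (Fin m) (Fin m) ℂ) (hH : H.IsHermitian) :
    ∃ c : ℝ, (H + (c : ℂ) • 1).PosSemidef := by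
  refine ⟨∑ i, |hH.eigenvalues i|, ?_⟩
  have hspec := hH.spectral_theorem
  rw [Unitary.conjStarAlgAut_apply] at hspec
  set U : Matrix (Fin m) (Fin m) ℂ := (hH.eigenvectorUnitary : Matrix (Fin m) (Fin m) ℂ) with hU
  set c : ℝ := ∑ i, |hH.eigenvalues i| with hc
  have hUU : U * star U = 1 := Matrix.mem_unitaryGroup_iff.mp hH.eigenvectorUnitary.2
  have h1 : H + (c:ℂ) • 1 =
      U * (diagonal (fun i => ((hH.eigenvalues i + c : ℝ) : ℂ))) * star U := by
    have h2 : (diagonal (fun i => ((hH.eigenvalues i + c : ℝ) : ℂ)))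
        = diagonal ((RCLike.ofReal ∘ hH.eigenvalues) : Fin m → ℂ) + (c:ℂ) • 1 := by
      rw [smul_one_eq_diagonal, diagonal_add]
      congr 1
      funext i
      push_cast
      simp
    rw [h2, mul_add, add_mul, ← hspec]
    congr 1
    rw [mul_smul_comm, smul_mul_assoc, mul_one, hUU]
  rw [h1]
  have hd : (diagonal (fun i => ((hH.eigenvalues i + c : ℝ) : ℂ))).PosSemidef := by
    refine Matrix.PosSemidef.diagonal ?_
    rw [Pi.le_def]
    intro i
    have h3 : (0:ℝ) ≤ hH.eigenvalues i + c := by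
      have : |hH.eigenvalues i| ≤ c := by
        rw [hc]
        exact Finset.single_le_sum (f := fun j => |hH.eigenvalues j|)
          (fun j _ => abs_nonneg _) (Finset.mem_univ i)
      linarith [neg_abs_le (hH.eigenvalues i)]
    exact Complex.zero_le_real.mpr h3
  have := hd.mul_mul_conjTranspose_same U
  rwa [← star_eq_conjTranspose] at this
lemma posmap_conjTranspose {m k : ℕ} (Φ : Matrix (Fin m) (Fin m) ℂ →ₗ[ℂ] Matrix (Fin k) (Fin k) ℂ)
    (hΦ : ∀ X : Matrix (Fin m) (Fin m) ℂ, X.PosSemidef → (Φ X).PosSemidef)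
    (X : Matrix (Fin m) (Fin m) ℂ) : (Φ X)ᴴ = Φ Xᴴ := by
  have key : ∀ H : Matrix (Fin m) (Fin m) ℂ, H.IsHermitian → (Φ H).IsHermitian := by
    intro H hH
    obtain ⟨c, hc⟩ := herm_add_smul_one_psd H hH
    have h1 : Φ H = Φ (H + (c:ℂ) • 1) - (c:ℂ) • Φ 1 := by
      rw [map_add, LinearMap.map_smul]; abel
    rw [h1]
    have hH1 : (Φ (H + (c:ℂ) • 1)).IsHermitian := (hΦ _ hc).1
    have hI : (Φ 1).IsHermitian := (hΦ 1 Matrix.PosSemidef.one).1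
    have hI' : ((c:ℂ) • Φ 1).IsHermitian := by
      unfold Matrix.IsHermitian
      rw [conjTranspose_smul, hI.eq]
      congr 1
      simp
    exact hH1.sub hI'
  have main : ∀ (H K : Matrix (Fin m) (Fin m) ℂ), H.IsHermitian → K.IsHermitian →
      (Φ (H + Complex.I • K))ᴴ = Φ (H - Complex.I • K) := by
    intro H K hH hK
    rw [map_add, map_sub, LinearMap.map_smul, conjTranspose_add,
      conjTranspose_smul, (key H hH).eq, (key K hK).eq]
    simp [Complex.conj_I, sub_eq_add_neg]
  have hH : ((2⁻¹ : ℂ) • (X + Xᴴ)).IsHermitian := by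
    ext i j
    simp only [conjTranspose_apply, Matrix.smul_apply, Matrix.add_apply, smul_eq_mul, Complex.star_def,
      map_add, _root_.map_mul, map_inv₀, map_ofNat, _root_.map_one, map_div₀, Complex.conj_conj]
    ring
  have hK : ((-(Complex.I)/2) • (X - Xᴴ)).IsHermitian := by
    ext i j
    simp only [conjTranspose_apply, Matrix.smul_apply, Matrix.sub_apply, smul_eq_mul, Complex.star_def,
      map_sub, _root_.map_mul, map_div₀, map_neg, map_ofNat, _root_.map_one, Complex.conj_I,
      Complex.conj_conj]
    ring
  have hX : X = (2⁻¹ : ℂ) • (X + Xᴴ) + Complex.I • ((-(Complex.I)/2) • (X - Xᴴ)) := by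
    match_scalars <;> simp [Complex.I_sq] <;> ring_nf <;> norm_num
  have hXH : Xᴴ = (2⁻¹ : ℂ) • (X + Xᴴ) - Complex.I • ((-(Complex.I)/2) • (X - Xᴴ)) := by
    match_scalars <;> simp [Complex.I_sq] <;> ring_nf <;> norm_num
  calc (Φ X)ᴴ = (Φ ((2⁻¹ : ℂ) • (X + Xᴴ) + Complex.I • ((-(Complex.I)/2) • (X - Xᴴ))))ᴴ := by
        rw [← hX]
    _ = Φ ((2⁻¹ : ℂ) • (X + Xᴴ) - Complex.I • ((-(Complex.I)/2) • (X - Xᴴ))) := main _ _ hH hK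
    _ = Φ Xᴴ := by rw [← hXH]
lemma qf_sum_eq {n m k : ℕ}
    (Φ : Matrix (Fin m) (Fin m) ℂ →ₗ[ℂ] Matrix (Fin k) (Fin k) ℂ)
    (Ψ : Matrix (Fin k) (Fin k) ℂ →ₗ[ℂ] Matrix (Fin m) (Fin m) ℂ)
    (hΨ : ∀ (X : Matrix (Fin m) (Fin m) ℂ) (Y : Matrix (Fin k) (Fin k) ℂ),
      (Φ X * Y).trace = (X * Ψ Y).trace)
    (ρ : Matrix (Fin n × Fin m) (Fin n × Fin m) ℂ) (η : Fin n × Fin k → ℂ) :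
    (∑ p : Fin n × Fin m, ∑ q : Fin n × Fin m,
        (Ψ (Matrix.of fun α β : Fin k => η (p.1, α) * star (η (q.1, β)))) p.2 q.2 * ρ q p)
      = star η ⬝ᵥ ((Matrix.of fun p q : Fin n × Fin k =>
          (Φ (Matrix.of fun a b : Fin m => ρ (p.1, a) (q.1, b))) p.2 q.2) *ᵥ η) := by
  have key : ∀ i j : Fin n,
      (∑ a : Fin m, ∑ b : Fin m,
        (Ψ (Matrix.of fun α β : Fin k => η (i, α) * star (η (j, β)))) a b * ρ (j, b) (i, a))
      = ∑ α : Fin k, ∑ β : Fin k,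
          (Φ (Matrix.of fun a b : Fin m => ρ (j, a) (i, b))) α β
            * (η (i, β) * star (η (j, α))) := by
    intro i j
    have h := hΨ (Matrix.of fun a b : Fin m => ρ (j, a) (i, b))
      (Matrix.of fun α β : Fin k => η (i, α) * star (η (j, β)))
    rw [Matrix.trace, Matrix.trace] at h
    simp only [Matrix.diag, Matrix.mul_apply, Matrix.of_apply] at h
    calc (∑ a : Fin m, ∑ b : Fin m,
            (Ψ (Matrix.of fun α β : Fin k => η (i, α) * star (η (j, β)))) a b * ρ (j, b) (i, a))
        = ∑ c : Fin m, ∑ d : Fin m, ρ (j, c) (i, d)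
            * (Ψ (Matrix.of fun α β : Fin k => η (i, α) * star (η (j, β)))) d c := by
          rw [Finset.sum_comm]
          exact Finset.sum_congr rfl fun c _ => Finset.sum_congr rfl fun d _ => mul_comm _ _
      _ = ∑ α : Fin k, ∑ β : Fin k,
            (Φ (Matrix.of fun a b : Fin m => ρ (j, a) (i, b))) α β
              * (η (i, β) * star (η (j, α))) := by
          rw [← h]
  calc (∑ p : Fin n × Fin m, ∑ q : Fin n × Fin m,
        (Ψ (Matrix.of fun α β : Fin k => η (p.1, α) * star (η (q.1, β)))) p.2 q.2 * ρ q p)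
      = ∑ i : Fin n, ∑ j : Fin n, ∑ a : Fin m, ∑ b : Fin m,
          (Ψ (Matrix.of fun α β : Fin k => η (i, α) * star (η (j, β)))) a b * ρ (j, b) (i, a) := by
        rw [Fintype.sum_prod_type]
        refine Finset.sum_congr rfl fun i _ => ?_
        rw [Finset.sum_comm]
        rw [Fintype.sum_prod_type]
        refine Finset.sum_congr rfl fun j _ => ?_
        exact Finset.sum_comm
    _ = ∑ i : Fin n, ∑ j : Fin n, ∑ α : Fin k, ∑ β : Fin k,
          (Φ (Matrix.of fun a b : Fin m => ρ (j, a) (i, b))) α β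
            * (η (i, β) * star (η (j, α))) := by
        exact Finset.sum_congr rfl fun i _ => Finset.sum_congr rfl fun j _ => key i j
    _ = star η ⬝ᵥ ((Matrix.of fun p q : Fin n × Fin k =>
          (Φ (Matrix.of fun a b : Fin m => ρ (p.1, a) (q.1, b))) p.2 q.2) *ᵥ η) := by
        simp only [dotProduct, mulVec, Pi.star_apply, Matrix.of_apply, Finset.mul_sum,
          Fintype.sum_prod_type]
        rw [Finset.sum_comm]
        refine Finset.sum_congr rfl fun j _ => ?_
        rw [Finset.sum_comm]
        exact Finset.sum_congr rfl fun α _ => Finset.sum_congr rfl fun i _ =>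
          Finset.sum_congr rfl fun β _ => by ring
lemma bad_finite {n : ℕ} (B : Matrix (Fin n) (Fin n) ℂ) :
    {t : ℝ | ¬ IsUnit (B + (t:ℂ) • 1)}.Finite := by
  have hs : (spectrum ℂ B).Finite := B.finite_spectrum
  have hsub : {t : ℝ | ¬ IsUnit (B + (t:ℂ) • 1)}
      ⊆ (fun t : ℝ => (t:ℂ)) ⁻¹' (Neg.neg '' spectrum ℂ B) := by
    intro t ht
    have h1 : (-(t:ℂ)) ∈ spectrum ℂ B := by
      rw [spectrum.mem_iff]
      rw [Algebra.algebraMap_eq_smul_one]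
      intro hu
      apply ht
      have : (-(t:ℂ)) • (1 : Matrix (Fin n) (Fin n) ℂ) - B = -(B + (t:ℂ) • 1) := by
        rw [neg_smul]; abel
      rw [this, IsUnit.neg_iff] at hu
      exact hu
    exact ⟨-(t:ℂ), h1, by simp⟩
  exact Set.Finite.subset (Set.Finite.preimage
    ((Complex.ofReal_injective).injOn) (hs.image _)) hsub

lemma rank_perturb_aux {n k : ℕ} (h : n ≤ k) (V W : Matrix (Fin n) (Fin k) ℂ)
    (hW : W.submatrix id (Fin.castLE h) = 1) :
    ∃ S : Set ℝ, S.Finite ∧ ∀ t : ℝ, t ∉ S → (V + (t:ℂ) • W).rank = n := by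
  set f : Fin n → Fin k := Fin.castLE h with hf
  set B : Matrix (Fin n) (Fin n) ℂ := V.submatrix id f with hB
  refine ⟨{t : ℝ | ¬ IsUnit (B + (t:ℂ) • 1)}, bad_finite B, fun t ht => ?_⟩
  have hunit : IsUnit (B + (t:ℂ) • 1) := not_not.mp ht
  set P : Matrix (Fin k) (Fin n) ℂ := Matrix.of fun β j => if β = f j then 1 else 0 with hP
  have hmul : ∀ A : Matrix (Fin n) (Fin k) ℂ, A * P = A.submatrix id f := by
    intro A
    ext i j
    simp [Matrix.mul_apply, hP, mul_ite, mul_one, mul_zero]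
  have hsub : (V + (t:ℂ) • W).submatrix id f = B + (t:ℂ) • 1 := by
    rw [hB]
    ext i j
    simp [Matrix.submatrix_apply, Matrix.add_apply, Matrix.smul_apply]
    left
    have := congrFun (congrFun hW i) j
    simpa using this
  have h1 : (B + (t:ℂ) • 1).rank = n := by
    rw [Matrix.rank_of_isUnit _ hunit, Fintype.card_fin]
  have h2 : ((V + (t:ℂ) • W) * P).rank ≤ (V + (t:ℂ) • W).rank :=
    Matrix.rank_mul_le_left _ _
  rw [hmul, hsub, h1] at h2
  have h3 : (V + (t:ℂ) • W).rank ≤ n := by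
    have := Matrix.rank_le_card_height (V + (t:ℂ) • W)
    simpa using this
  omega

lemma rank_perturb {n k : ℕ} (V : Matrix (Fin n) (Fin k) ℂ) :
    ∃ S : Set ℝ, S.Finite ∧ ∀ t : ℝ, t ∉ S →
      (V + (t:ℂ) • (Matrix.of fun (i : Fin n) (α : Fin k) =>
        if (i:ℕ) = (α:ℕ) then (1:ℂ) else 0)).rank = min n k := by
  set W : Matrix (Fin n) (Fin k) ℂ :=
    Matrix.of fun (i : Fin n) (α : Fin k) => if (i:ℕ) = (α:ℕ) then (1:ℂ) else 0 with hWdef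
  rcases le_total n k with h | h
  · have hW : W.submatrix id (Fin.castLE h) = 1 := by
      ext i j
      simp [hWdef, Matrix.one_apply, Fin.ext_iff]
    obtain ⟨S, hS, hrank⟩ := rank_perturb_aux h V W hW
    exact ⟨S, hS, fun t ht => by rw [hrank t ht, min_eq_left h]⟩
  · have hW : Wᵀ.submatrix id (Fin.castLE h) = 1 := by
      ext i j
      simp [hWdef, Matrix.one_apply, Fin.ext_iff, eq_comm]
    obtain ⟨S, hS, hrank⟩ := rank_perturb_aux h Vᵀ Wᵀ hW
    refine ⟨S, hS, fun t ht => ?_⟩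
    have : (V + (t:ℂ) • W)ᵀ = Vᵀ + (t:ℂ) • Wᵀ := by
      rw [transpose_add, transpose_smul]
    rw [← Matrix.rank_transpose, this, hrank t ht, min_eq_right h]
lemma qf_star {d : Type*} [Fintype d] (σ : Matrix d d ℂ) (hσ : σ.IsHermitian) (x : d → ℂ) :
    star (star x ⬝ᵥ (σ *ᵥ x)) = star x ⬝ᵥ (σ *ᵥ x) := by
  simp only [dotProduct, mulVec, Pi.star_apply, star_sum, star_mul', star_star, Finset.mul_sum]
  rw [Finset.sum_comm]
  refine Finset.sum_congr rfl fun p _ => Finset.sum_congr rfl fun q _ => ?_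
  have h1 : star (σ q p) = σ p q := by
    have := congrFun (congrFun hσ.eq p) q
    simpa [conjTranspose_apply] using this
  rw [h1]
  ring

lemma qf_cont {d : Type*} [Fintype d] (σ : Matrix d d ℂ) (v w : d → ℂ) :
    Continuous fun t : ℝ => (star (v + (t:ℂ) • w) ⬝ᵥ (σ *ᵥ (v + (t:ℂ) • w))).re := by
  simp only [dotProduct, mulVec, Pi.star_apply, Pi.add_apply, Pi.smul_apply, smul_eq_mul]
  fun_prop

/-- For a positive map Φ with Hilbert–Schmidt adjoint Ψ = Φ† and a state ρ,
(Id ⊗ Φ)(ρ) fails to be positive semidefinite iff there exists a vector η of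
maximal Schmidt rank min(n,k) with Tr[(Id ⊗ Φ†)(|η⟩⟨η|) ρ] < 0. -/
theorem stmt14 (n m k : ℕ)
    (Φ : Matrix (Fin m) (Fin m) ℂ →ₗ[ℂ] Matrix (Fin k) (Fin k) ℂ)
    (hΦ : ∀ X : Matrix (Fin m) (Fin m) ℂ, X.PosSemidef → (Φ X).PosSemidef)
    (Ψ : Matrix (Fin k) (Fin k) ℂ →ₗ[ℂ] Matrix (Fin m) (Fin m) ℂ)
    (hΨ : ∀ (X : Matrix (Fin m) (Fin m) ℂ) (Y : Matrix (Fin k) (Fin k) ℂ),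
      (Φ X * Y).trace = (X * Ψ Y).trace)
    (ρ : Matrix (Fin n × Fin m) (Fin n × Fin m) ℂ)
    (hρ : ρ.PosSemidef) (hρtr : ρ.trace = 1) :
    ¬ (Matrix.of fun p q : Fin n × Fin k =>
          (Φ (Matrix.of fun a b : Fin m => ρ (p.1, a) (q.1, b))) p.2 q.2).PosSemidef
    ↔ ∃ η : Fin n × Fin k → ℂ,
        (Matrix.of fun (i : Fin n) (α : Fin k) => η (i, α)).rank = min n k ∧
        (∑ p : Fin n × Fin m, ∑ q : Fin n × Fin m,
          (Ψ (Matrix.of fun α β : Fin k => η (p.1, α) * star (η (q.1, β)))) p.2 q.2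
            * ρ q p) < 0 := by
  have hherm : (Matrix.of fun p q : Fin n × Fin k =>
      (Φ (Matrix.of fun a b : Fin m => ρ (p.1, a) (q.1, b))) p.2 q.2).IsHermitian := by
    have hX : ∀ p q : Fin n × Fin k, (Matrix.of fun a b : Fin m => ρ (q.1, a) (p.1, b))ᴴ
        = Matrix.of fun a b : Fin m => ρ (p.1, a) (q.1, b) := by
      intro p q
      ext a b
      simp only [conjTranspose_apply, Matrix.of_apply]
      have := congrFun (congrFun hρ.1.eq (p.1, a)) (q.1, b)
      simpa [conjTranspose_apply] using this
    unfold Matrix.IsHermitian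
    ext p q
    simp only [conjTranspose_apply, Matrix.of_apply]
    calc star ((Φ (Matrix.of fun a b : Fin m => ρ (q.1, a) (p.1, b))) q.2 p.2)
        = (Φ (Matrix.of fun a b : Fin m => ρ (q.1, a) (p.1, b)))ᴴ p.2 q.2 := rfl
      _ = (Φ ((Matrix.of fun a b : Fin m => ρ (q.1, a) (p.1, b))ᴴ)) p.2 q.2 := by
          rw [posmap_conjTranspose Φ hΦ]
      _ = _ := by rw [hX p q]
  constructor
  · intro hnot
    have hnall : ¬ ∀ x : Fin n × Fin k → ℂ, 0 ≤ star x ⬝ᵥ ((Matrix.of fun p q : Fin n × Fin k =>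
        (Φ (Matrix.of fun a b : Fin m => ρ (p.1, a) (q.1, b))) p.2 q.2) *ᵥ x) :=
      fun hall => hnot (Matrix.PosSemidef.of_dotProduct_mulVec_nonneg hherm hall)
    obtain ⟨v, hv⟩ := not_forall.mp hnall
    set σm : Matrix (Fin n × Fin k) (Fin n × Fin k) ℂ := Matrix.of fun p q : Fin n × Fin k =>
        (Φ (Matrix.of fun a b : Fin m => ρ (p.1, a) (q.1, b))) p.2 q.2 with hσm
    have himv : (star v ⬝ᵥ σm *ᵥ v).im = 0 :=
      Complex.conj_eq_iff_im.mp (qf_star σm hherm v)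
    have hrev : (star v ⬝ᵥ σm *ᵥ v).re < 0 := by
      by_contra hge
      exact hv (Complex.le_def.mpr ⟨by simpa using not_lt.mp hge, by simp [himv]⟩)
    -- perturbation
    set w : Fin n × Fin k → ℂ := fun p => if (p.1 : ℕ) = (p.2 : ℕ) then (1:ℂ) else 0 with hw
    set V : Matrix (Fin n) (Fin k) ℂ := Matrix.of fun i α => v (i, α) with hV
    obtain ⟨S, hSfin, hSrank⟩ := rank_perturb V
    have hcont := qf_cont σm v w
    have hopen : IsOpen ((fun t : ℝ => (star (v + (t:ℂ) • w) ⬝ᵥ σm *ᵥ (v + (t:ℂ) • w)).re) ⁻¹'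
        Set.Iio 0) := (isOpen_Iio).preimage hcont
    have h0mem : (0:ℝ) ∈ ((fun t : ℝ => (star (v + (t:ℂ) • w) ⬝ᵥ σm *ᵥ (v + (t:ℂ) • w)).re) ⁻¹'
        Set.Iio 0) := by
      simpa using hrev
    obtain ⟨δ, hδpos, hball⟩ := Metric.isOpen_iff.mp hopen 0 h0mem
    have hballinf : (Metric.ball (0:ℝ) δ).Infinite := by
      rw [Real.ball_eq_Ioo]
      have hlt : (0:ℝ) - δ < 0 + δ := by
        clear hv hnall
        linarith
      exact Set.Ioo_infinite hlt
    obtain ⟨t, htmem⟩ := (hballinf.diff hSfin).nonempty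
    have htball : t ∈ Metric.ball (0:ℝ) δ := htmem.1
    have htS : t ∉ S := htmem.2
    refine ⟨v + (t:ℂ) • w, ?_, ?_⟩
    · have hmat : (Matrix.of fun (i : Fin n) (α : Fin k) => (v + (t:ℂ) • w) (i, α))
          = V + (t:ℂ) • (Matrix.of fun (i : Fin n) (α : Fin k) =>
            if (i:ℕ) = (α:ℕ) then (1:ℂ) else 0) := by
        ext i α
        simp [hV, hw]
      rw [hmat]
      exact hSrank t htS
    · rw [qf_sum_eq Φ Ψ hΨ ρ]
      have hlt : (star (v + (t:ℂ) • w) ⬝ᵥ σm *ᵥ (v + (t:ℂ) • w)).re < 0 := hball htball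
      have him : (star (v + (t:ℂ) • w) ⬝ᵥ σm *ᵥ (v + (t:ℂ) • w)).im = 0 :=
        Complex.conj_eq_iff_im.mp (qf_star σm hherm _)
      rw [Complex.lt_def]
      refine ⟨?_, ?_⟩
      · simp only [Complex.zero_re]
        exact hlt
      · simp only [Complex.zero_im]
        exact him
  · rintro ⟨η, _, hneg⟩ hPSD
    rw [qf_sum_eq Φ Ψ hΨ ρ η] at hneg
    exact (hPSD.dotProduct_mulVec_nonneg η).not_gt hneg
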